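/- Let n ≥ 2 be an integer and let f, g ∈ ℂ[x,y]. Let D be the derivation of ℂ[x,y] with D(x) = f and D(y) = g. Assume D is simple and that the one-variable polynomial f(0,y), obtained by substituting x = 0 in f, is a nonzero constant. Let D_n be the derivation of ℂ[x,y] with D_n(x) = f(xⁿ, y) and D_n(y) = n·x^(n-1)·g(xⁿ, y), where f(xⁿ,y) and g(xⁿ,y) denote the substitution of xⁿ for x. Then D_n is also a simple derivation. -/

import Mathlib

open MvPolynomial

/-- The polynomial ring `ℂ[x,y]`. -/
abbrev Rxy : Type := MvPolynomial (Fin 2) ℂ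

/-- A derivation of `ℂ[x,y]` is simple if the only ideals `I` with `D(I) ⊆ I`
are the zero ideal and the whole ring. -/
def IsSimpleDer (D : Derivation ℂ Rxy Rxy) : Prop :=
  ∀ I : Ideal Rxy, (∀ a ∈ I, D a ∈ I) → I = ⊥ ∨ I = ⊤

namespace PullbackAux

noncomputable def psi (n : ℕ) : Rxy →ₐ[ℂ] Rxy := aeval ![(X 0 : Rxy) ^ n, X 1]

noncomputable def sig (ζ : ℂ) (k : ℕ) : Rxy →ₐ[ℂ] Rxy := aeval ![C (ζ ^ k) * X 0, X 1]

lemma fin2_eq (m : Fin 2 →₀ ℕ) : m = Finsupp.single 0 (m 0) + Finsupp.single 1 (m 1) := by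
  ext i
  fin_cases i <;> simp [Finsupp.single_apply]

lemma sig_monomial (ζ : ℂ) (k : ℕ) (m : Fin 2 →₀ ℕ) (a : ℂ) :
    sig ζ k (monomial m a) = monomial m (ζ ^ (k * m 0) * a) := by
  rw [monomial_eq, monomial_eq]
  simp only [sig, map_mul, map_pow, aeval_C, Finsupp.prod_pow, Fin.prod_univ_two, aeval_X,
    Matrix.cons_val_zero, Matrix.cons_val_one, Matrix.head_cons, algebraMap_eq]
  rw [mul_pow]
  ring

lemma sig_coeff (ζ : ℂ) (k : ℕ) (p : Rxy) (m : Fin 2 →₀ ℕ) :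
    coeff m (sig ζ k p) = ζ ^ (k * m 0) * coeff m p := by
  conv_lhs => rw [p.as_sum, map_sum]
  rw [coeff_sum]
  simp only [sig_monomial, coeff_monomial]
  rw [Finset.sum_ite_eq' p.support m (fun s => ζ ^ (k * s 0) * coeff s p)]
  by_cases hm : m ∈ p.support
  · simp [hm]
  · simp [hm, notMem_support_iff.mp hm]

lemma psi_monomial (n a b : ℕ) (c : ℂ) :
    psi n (monomial (Finsupp.single 0 a + Finsupp.single 1 b) c)
      = monomial (Finsupp.single 0 (n * a) + Finsupp.single 1 b) c := by
  rw [monomial_eq, monomial_eq]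
  simp [psi, Finsupp.prod_pow, Fin.prod_univ_two, Finsupp.single_apply, ← pow_mul]

lemma sig_zero (ζ : ℂ) (p : Rxy) : sig ζ 0 p = p := by
  ext m; simp [sig_coeff]

lemma sig_sig (ζ : ℂ) (j k : ℕ) (p : Rxy) : sig ζ j (sig ζ k p) = sig ζ (j + k) p := by
  ext m; simp only [sig_coeff]; rw [← mul_assoc, ← pow_add, add_mul]

lemma sig_ne_zero (ζ : ℂ) (hζ0 : ζ ≠ 0) (k : ℕ) (p : Rxy) (hp : p ≠ 0) : sig ζ k p ≠ 0 := by
  intro h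
  apply hp
  ext m
  have := sig_coeff ζ k p m
  rw [h] at this
  simpa [pow_ne_zero _ hζ0, eq_comm] using this.symm

lemma exists_norm (n : ℕ) (hn : 2 ≤ n) (I : Ideal Rxy) (p : Rxy) (hp : p ∈ I) (hp0 : p ≠ 0) :
    ∃ q : Rxy, q ≠ 0 ∧ psi n q ∈ I := by
  have hnne : n ≠ 0 := by omega
  obtain ⟨ζ, hζ⟩ : ∃ ζ : ℂ, IsPrimitiveRoot ζ n := ⟨_, Complex.isPrimitiveRoot_exp n hnne⟩
  have hζ0 : ζ ≠ 0 := by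
    intro h
    have := hζ.pow_eq_one
    rw [h, zero_pow hnne] at this
    exact zero_ne_one this
  set Q : Rxy := ∏ k ∈ Finset.range n, sig ζ k p with hQdef
  have hQI : Q ∈ I := by
    rw [hQdef, ← Finset.mul_prod_erase (Finset.range n) _ (Finset.mem_range.mpr (by omega : 0 < n)),
      sig_zero]
    exact Ideal.mul_mem_right _ I hp
  have hQ0 : Q ≠ 0 := by
    rw [hQdef]
    exact Finset.prod_ne_zero_iff.mpr fun k _ => sig_ne_zero ζ hζ0 k p hp0
  have hsn : sig ζ n p = sig ζ 0 p := by
    ext m; rw [sig_coeff, sig_coeff, pow_mul, hζ.pow_eq_one, one_pow]; simp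
  have hσQ : sig ζ 1 Q = Q := by
    rw [hQdef, map_prod]
    have h1 : ∀ k ∈ Finset.range n, sig ζ 1 (sig ζ k p) = sig ζ (k + 1) p := by
      intro k _; rw [sig_sig, add_comm]
    rw [Finset.prod_congr rfl h1]
    have h2 := Finset.prod_range_succ (fun k => sig ζ k p) n
    have h3 := Finset.prod_range_succ' (fun k => sig ζ k p) n
    rw [hsn, sig_zero] at h2
    rw [sig_zero] at h3
    exact mul_right_cancel₀ hp0 (h3.symm.trans h2)
  have hdvd : ∀ m ∈ Q.support, n ∣ m 0 := by
    intro m hmQ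
    have hc := sig_coeff ζ 1 Q m
    rw [hσQ, one_mul] at hc
    have hcoeff : coeff m Q ≠ 0 := mem_support_iff.mp hmQ
    have : ζ ^ m 0 = 1 := mul_right_cancel₀ hcoeff (hc.symm.trans (one_mul _).symm)
    exact (hζ.pow_eq_one_iff_dvd _).mp this
  have hpsiq : psi n (∑ m ∈ Q.support, monomial
      (Finsupp.single 0 (m 0 / n) + Finsupp.single 1 (m 1)) (coeff m Q)) = Q := by
    rw [map_sum]
    have : ∀ m ∈ Q.support,
        psi n (monomial (Finsupp.single 0 (m 0 / n) + Finsupp.single 1 (m 1)) (coeff m Q))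
          = monomial m (coeff m Q) := by
      intro m hm
      rw [psi_monomial, Nat.mul_div_cancel' (hdvd m hm), ← fin2_eq]
    rw [Finset.sum_congr rfl this, ← as_sum]
  refine ⟨∑ m ∈ Q.support, monomial (Finsupp.single 0 (m 0 / n) + Finsupp.single 1 (m 1))
      (coeff m Q), ?_, ?_⟩
  · intro h0
    apply hQ0
    rw [← hpsiq, h0, map_zero]
  · rw [hpsiq]; exact hQI

lemma key (n : ℕ) (f g : Rxy) (D Dn : Derivation ℂ Rxy Rxy)
    (hDx : D (X 0) = f) (hDy : D (X 1) = g)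
    (hDnx : Dn (X 0) = psi n f)
    (hDny : Dn (X 1) = (n : Rxy) * X 0 ^ (n - 1) * psi n g)
    (p : Rxy) : Dn (psi n p) = (n : Rxy) * X 0 ^ (n - 1) * psi n (D p) := by
  have hX : ∀ i : Fin 2, Dn (psi n (X i)) = (n : Rxy) * X 0 ^ (n - 1) * psi n (D (X i)) := by
    intro i
    fin_cases i
    · show Dn (psi n (X 0)) = (n : Rxy) * X 0 ^ (n - 1) * psi n (D (X 0))
      have h0 : psi n (X (0 : Fin 2)) = (X 0 : Rxy) ^ n := by simp [psi]
      rw [h0, Derivation.leibniz_pow, hDnx, hDx]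
      simp only [nsmul_eq_mul, smul_eq_mul]
      ring
    · show Dn (psi n (X 1)) = (n : Rxy) * X 0 ^ (n - 1) * psi n (D (X 1))
      have h1 : psi n (X (1 : Fin 2)) = (X 1 : Rxy) := by simp [psi]
      rw [h1, hDny, hDy]
  induction p using MvPolynomial.induction_on with
  | C a =>
      have hCa : psi n (C a : Rxy) = C a := by simp [psi, algebraMap_eq]
      rw [hCa]
      have hD : D (C a : Rxy) = 0 := by
        rw [← algebraMap_eq]; exact Derivation.map_algebraMap D a
      have hDn : Dn (C a : Rxy) = 0 := by
        rw [← algebraMap_eq]; exact Derivation.map_algebraMap Dn a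
      rw [hDn, hD, map_zero, mul_zero]
  | add p q hp hq => rw [map_add, map_add, hp, hq, map_add, map_add]; ring
  | mul_X p i hp =>
      rw [map_mul, Derivation.leibniz, Derivation.leibniz]
      simp only [smul_eq_mul, map_add, map_mul]
      rw [hp, hX i]
      ring

lemma decomp (n : ℕ) (f : Rxy) (c : ℂ) (hf0 : aeval ![(0 : Rxy), X 1] f = C c) :
    ∃ h : Rxy, psi n f = C c + X 0 ^ n * h := by
  have hmem : psi n f - C c ∈ Ideal.span {(X 0 : Rxy) ^ n} := by
    set Q := Ideal.span {(X 0 : Rxy) ^ n}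
    set π := Ideal.Quotient.mkₐ ℂ Q with hπ
    have hx : π ((X 0 : Rxy) ^ n) = 0 := by
      rw [← RingHom.map_zero (Ideal.Quotient.mk Q)]
      exact Ideal.Quotient.eq.mpr (by simpa [Q] using Ideal.subset_span (Set.mem_singleton ((X 0 : Rxy) ^ n)))
    have h1 : π (psi n f) = π (aeval ![(0 : Rxy), X 1] f) := by
      have hfun : (fun i => π (![(X 0 : Rxy) ^ n, X 1] i)) = fun i => π (![(0 : Rxy), X 1] i) := by
        funext i
        fin_cases i
        · show π ((X 0 : Rxy) ^ n) = π 0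
          rw [map_zero]; exact hx
        · rfl
      rw [show psi n f = aeval ![(X 0 : Rxy) ^ n, X 1] f from rfl,
        comp_aeval_apply, comp_aeval_apply, hfun]
    rw [hf0] at h1
    have h2 : π (psi n f - C c) = 0 := by rw [map_sub, h1, sub_self]
    rwa [← Ideal.Quotient.eq_zero_iff_mem]
  rw [Ideal.mem_span_singleton] at hmem
  obtain ⟨h, hh⟩ := hmem
  exact ⟨h, by rw [← hh]; ring⟩

end PullbackAux

theorem pullback_of_simple_derivation_is_simple (n : ℕ) (hn : 2 ≤ n) (f g : Rxy)
    (D : Derivation ℂ Rxy Rxy) (hDx : D (X 0) = f) (hDy : D (X 1) = g)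
    (hsimple : IsSimpleDer D)
    (c : ℂ) (hc : c ≠ 0) (hf0 : aeval ![(0 : Rxy), X 1] f = C c)
    (Dn : Derivation ℂ Rxy Rxy)
    (hDnx : Dn (X 0) = aeval ![(X 0 : Rxy) ^ n, X 1] f)
    (hDny : Dn (X 1) = (n : Rxy) * X 0 ^ (n - 1) * aeval ![(X 0 : Rxy) ^ n, X 1] g) :
    IsSimpleDer Dn := by
  obtain ⟨k, rfl⟩ : ∃ k, n = k + 2 := ⟨n - 2, by omega⟩
  intro I hI
  by_cases hbot : I = ⊥
  · exact Or.inl hbot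
  right
  by_contra htop
  set ψn : Rxy →ₐ[ℂ] Rxy := PullbackAux.psi (k + 2) with hψn
  have hDnx' : Dn (X 0) = ψn f := hDnx
  have hDny' : Dn (X 1) = ((k + 2 : ℕ) : Rxy) * X 0 ^ (k + 2 - 1) * ψn g := hDny
  have hγ0 : ((k + 2 : ℕ) : ℂ) ≠ 0 := Nat.cast_ne_zero.mpr (by omega)
  -- helper: cancel a nonzero constant
  have hCmul : ∀ (γ : ℂ) (p : Rxy), γ ≠ 0 → C γ * p ∈ I → p ∈ I := by
    intro γ p hγ hmem
    have hmem2 := I.mul_mem_left (C γ⁻¹) hmem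
    rwa [← mul_assoc, ← C_mul, inv_mul_cancel₀ hγ, C_1, one_mul] at hmem2
  -- key pullback identity
  have key' : ∀ p : Rxy, Dn (ψn p) = C ((k + 2 : ℕ) : ℂ) * X 0 ^ (k + 1) * ψn (D p) := by
    intro p
    rw [PullbackAux.key (k + 2) f g D Dn hDx hDy hDnx' hDny' p,
      show k + 2 - 1 = k + 1 from rfl,
      show ((k + 2 : ℕ) : Rxy) = C ((k + 2 : ℕ) : ℂ) from (map_natCast C _).symm]
  -- decomposition Dn(x) = c + x^n h
  obtain ⟨h, hh⟩ := PullbackAux.decomp (k + 2) f c hf0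
  have hDnx'' : Dn (X 0) = C c + X 0 ^ (k + 2) * h := by rw [hDnx']; exact hh
  -- no power of X 0 lies in I
  have hxpow : ∀ m : ℕ, (X 0 : Rxy) ^ m ∉ I := by
    intro m
    induction m with
    | zero =>
        intro h0
        exact htop ((Ideal.eq_top_iff_one I).mpr (by simpa using h0))
    | succ m ih =>
        intro hmem
        apply ih
        have h1 : Dn (X 0 ^ (m + 1)) ∈ I := hI _ hmem
        rw [Derivation.leibniz_pow, hDnx''] at h1
        simp only [nsmul_eq_mul, smul_eq_mul, Nat.add_sub_cancel] at h1
        rw [show ((m + 1 : ℕ) : Rxy) = C ((m + 1 : ℕ) : ℂ) from (map_natCast C _).symm] at h1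
        have h2 : C ((m + 1 : ℕ) : ℂ) * h * X 0 ^ (k + 1) * X 0 ^ (m + 1) ∈ I :=
          Ideal.mul_mem_left _ _ hmem
        have h3 := I.sub_mem h1 h2
        have heq : C ((m + 1 : ℕ) : ℂ) * (X 0 ^ m * (C c + X 0 ^ (k + 2) * h))
            - C ((m + 1 : ℕ) : ℂ) * h * X 0 ^ (k + 1) * X 0 ^ (m + 1)
            = C (((m + 1 : ℕ) : ℂ) * c) * X 0 ^ m := by
          rw [C_mul]; ring
        rw [heq] at h3
        exact hCmul _ _ (mul_ne_zero (Nat.cast_ne_zero.mpr (Nat.succ_ne_zero m)) hc) h3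
  -- the pulled-back ideal
  let J : Ideal Rxy :=
    { carrier := {a : Rxy | ∃ j : ℕ, X 0 ^ j * ψn a ∈ I}
      add_mem' := by
        rintro a b ⟨ja, hja⟩ ⟨jb, hjb⟩
        refine ⟨ja + jb, ?_⟩
        have e : X 0 ^ (ja + jb) * ψn (a + b)
            = X 0 ^ jb * (X 0 ^ ja * ψn a) + X 0 ^ ja * (X 0 ^ jb * ψn b) := by
          rw [map_add, pow_add]; ring
        rw [e]
        exact I.add_mem (I.mul_mem_left _ hja) (I.mul_mem_left _ hjb)
      zero_mem' := ⟨0, by simp⟩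
      smul_mem' := by
        rintro r a ⟨ja, hja⟩
        refine ⟨ja, ?_⟩
        have e : X 0 ^ ja * ψn (r • a) = ψn r * (X 0 ^ ja * ψn a) := by
          rw [smul_eq_mul, map_mul]; ring
        rw [e]
        exact I.mul_mem_left _ hja }
  have memJ : ∀ a : Rxy, a ∈ J ↔ ∃ j : ℕ, X 0 ^ j * ψn a ∈ I := fun a => Iff.rfl
  -- J is D-invariant
  have hJinv : ∀ a ∈ J, D a ∈ J := by
    intro a ha
    obtain ⟨j, hj⟩ := (memJ a).mp ha
    have hstep : X 0 ^ (j + 1) * Dn (ψn a) ∈ I := by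
      cases j with
      | zero =>
          have hψa : ψn a ∈ I := by simpa using hj
          have := hI _ hψa
          simpa [pow_one] using I.mul_mem_left (X 0) this
      | succ j =>
          have h1 : Dn (X 0 ^ (j + 1) * ψn a) ∈ I := hI _ hj
          have h2 : (((j + 1 : ℕ) : Rxy) * Dn (X 0)) * (X 0 ^ (j + 1) * ψn a) ∈ I :=
            I.mul_mem_left _ hj
          have h3 := I.sub_mem (I.mul_mem_left (X 0) h1) h2
          have e : X 0 * Dn (X 0 ^ (j + 1) * ψn a)
              - (((j + 1 : ℕ) : Rxy) * Dn (X 0)) * (X 0 ^ (j + 1) * ψn a)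
              = X 0 ^ (j + 1 + 1) * Dn (ψn a) := by
            rw [Derivation.leibniz, Derivation.leibniz_pow]
            simp only [nsmul_eq_mul, smul_eq_mul, Nat.add_sub_cancel]
            ring
          rwa [e] at h3
    rw [key' a] at hstep
    refine (memJ _).mpr ⟨j + 1 + (k + 1), ?_⟩
    have hγ : C (((k + 2 : ℕ) : ℂ)⁻¹) * C ((k + 2 : ℕ) : ℂ) = (1 : Rxy) := by
      rw [← C_mul, inv_mul_cancel₀ hγ0, C_1]
    have e2 : X 0 ^ (j + 1 + (k + 1)) * ψn (D a)
        = C (((k + 2 : ℕ) : ℂ)⁻¹)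
          * (X 0 ^ (j + 1) * (C ((k + 2 : ℕ) : ℂ) * X 0 ^ (k + 1) * ψn (D a))) := by
      rw [pow_add]
      linear_combination (-(X 0 ^ (j + 1) * X 0 ^ (k + 1) * ψn (D a))) * hγ
    rw [e2]
    exact I.mul_mem_left _ hstep
  -- conclude by simplicity of D
  rcases hsimple J hJinv with hJ | hJ
  · obtain ⟨p, hpI, hp0⟩ := Submodule.exists_mem_ne_zero_of_ne_bot hbot
    obtain ⟨q, hq0, hqI⟩ := PullbackAux.exists_norm (k + 2) (by omega) I p hpI hp0
    have hqJ : q ∈ J := (memJ q).mpr ⟨0, by simpa using hqI⟩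
    rw [hJ] at hqJ
    exact hq0 (by simpa using hqJ)
  · have h1 : (1 : Rxy) ∈ J := hJ ▸ Submodule.mem_top
    obtain ⟨j, hj⟩ := (memJ 1).mp h1
    rw [map_one, mul_one] at hj
    exact hxpow j hj
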